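/- Let B : Set → Set be countably accessible, and suppose (T_c, η^c, μ^c) is a monad on the category cSet of countable sets which lifts to a monad (T̄_c, η̄^c, μ̄^c) on the category Coalg_c(B) of B-coalgebras with countable carrier. Then: (1) (T_c, η^c, μ^c) extends to a monad (T, η, μ) on Set along the inclusion I : cSet → Set; (2) (T̄_c, η̄^c, μ̄^c) extends to a monad (T̄, η̄, μ̄) on Coalg(B) along the inclusion Ī : Coalg_c(B) → Coalg(B); and (3) (T̄, η̄, μ̄) is a lifting up to isomorphism of (T, η, μ) to Coalg(B). -/

import Mathlib

/-- A `Set`-endofunctor, presented concretely. -/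
structure SetFunctor where
  obj : Type → Type
  map : {X Y : Type} → (X → Y) → obj X → obj Y
  map_id : ∀ {X : Type}, map (id : X → X) = id
  map_comp : ∀ {X Y Z : Type} (f : X → Y) (g : Y → Z), map (g ∘ f) = map g ∘ map f

/-- `h` is a `B`-coalgebra homomorphism from `(X, f)` to `(Y, g)`. -/
def IsCoalgHom (B : SetFunctor) {X Y : Type} (f : X → B.obj X) (g : Y → B.obj Y)
    (h : X → Y) : Prop :=
  ∀ x, B.map h (f x) = g (h x)

theorem isCoalgHom_id (B : SetFunctor) {X : Type} (f : X → B.obj X) :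
    IsCoalgHom B f f id := by
  intro x; rw [B.map_id]; rfl

theorem isCoalgHom_comp (B : SetFunctor) {X Y Z : Type} {f : X → B.obj X}
    {g : Y → B.obj Y} {e : Z → B.obj Z} {h₁ : X → Y} {h₂ : Y → Z}
    (hh₁ : IsCoalgHom B f g h₁) (hh₂ : IsCoalgHom B g e h₂) :
    IsCoalgHom B f e (h₂ ∘ h₁) := by
  intro x
  have := congrFun (B.map_comp h₁ h₂) (f x)
  simp only [Function.comp] at this ⊢
  rw [this, hh₁, hh₂]

/-- A `Set`-functor is countably accessible: every element of `BX` is the image of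
an element of `BY` for some countable subset `Y ↪ X`. -/
def SetFunctor.CountablyAccessible (B : SetFunctor) : Prop :=
  ∀ (X : Type) (x : B.obj X), ∃ (Y : Type) (_ : Countable Y) (i : Y → X),
    Function.Injective i ∧ ∃ y : B.obj Y, B.map i y = x

/-- A monad on `Set`, presented concretely. -/
structure SetMonad extends SetFunctor where
  η : {X : Type} → X → obj X
  μ : {X : Type} → obj (obj X) → obj X
  η_nat : ∀ {X Y : Type} (f : X → Y) (x : X), map f (η x) = η (f x)
  μ_nat : ∀ {X Y : Type} (f : X → Y) (t : obj (obj X)), map f (μ t) = μ (map (map f) t)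
  left_unit : ∀ {X : Type} (t : obj X), μ (η t) = t
  right_unit : ∀ {X : Type} (t : obj X), μ (map η t) = t
  assoc : ∀ {X : Type} (t : obj (obj (obj X))), μ (μ t) = μ (map μ t)

/-- An object of `cSet`, the category of countable sets. -/
structure CSet where
  carrier : Type
  cnt : Countable carrier

/-- A monad on the category `cSet` of countable sets, presented concretely. -/
structure CntMonad where
  obj : CSet → CSet
  map : {X Y : CSet} → (X.carrier → Y.carrier) → (obj X).carrier → (obj Y).carrier
  map_id : ∀ {X : CSet}, map (id : X.carrier → X.carrier) = id
  map_comp : ∀ {X Y Z : CSet} (f : X.carrier → Y.carrier) (g : Y.carrier → Z.carrier),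
    map (g ∘ f) = map g ∘ map f
  η : {X : CSet} → X.carrier → (obj X).carrier
  μ : {X : CSet} → (obj (obj X)).carrier → (obj X).carrier
  η_nat : ∀ {X Y : CSet} (f : X.carrier → Y.carrier) (x : X.carrier),
    map f (η x) = η (f x)
  μ_nat : ∀ {X Y : CSet} (f : X.carrier → Y.carrier) (t : (obj (obj X)).carrier),
    map f (μ t) = μ (map (map f) t)
  left_unit : ∀ {X : CSet} (t : (obj X).carrier), μ (η t) = t
  right_unit : ∀ {X : CSet} (t : (obj X).carrier), μ (map η t) = t
  assoc : ∀ {X : CSet} (t : (obj (obj (obj X))).carrier), μ (μ t) = μ (map μ t)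

/-- An object of `Coalg(B)`: a `B`-coalgebra. -/
structure BCoalg (B : SetFunctor) where
  carrier : Type
  str : carrier → B.obj carrier

/-- An object of `Coalg_c(B)`: a `B`-coalgebra with countable carrier. -/
structure CBCoalg (B : SetFunctor) where
  carrier : Type
  cnt : Countable carrier
  str : carrier → B.obj carrier

def CBCoalg.toCSet {B : SetFunctor} (c : CBCoalg B) : CSet := ⟨c.carrier, c.cnt⟩

def CBCoalg.toBCoalg {B : SetFunctor} (c : CBCoalg B) : BCoalg B := ⟨c.carrier, c.str⟩

/-- A lifting of the monad `T` on `cSet` to `Coalg_c(B)`: it sends a coalgebra with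
countable carrier `X` to a coalgebra on `T X` (so `U T̄ = T U`, `U η̄ = η U` and
`U μ̄ = μ U` hold on the nose), functorially, with `η` and `μ` becoming coalgebra
homomorphisms. -/
structure CntMonadLifting (B : SetFunctor) (T : CntMonad) where
  lift : (c : CBCoalg B) → (T.obj c.toCSet).carrier → B.obj (T.obj c.toCSet).carrier
  map_hom : ∀ (c d : CBCoalg B) (h : c.carrier → d.carrier),
    IsCoalgHom B c.str d.str h →
      IsCoalgHom B (lift c) (lift d) (T.map (X := c.toCSet) (Y := d.toCSet) h)
  η_hom : ∀ c : CBCoalg B, IsCoalgHom B c.str (lift c) (T.η (X := c.toCSet))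
  μ_hom : ∀ c : CBCoalg B,
    IsCoalgHom B (lift ⟨(T.obj c.toCSet).carrier, (T.obj c.toCSet).cnt, lift c⟩)
      (lift c) (T.μ (X := c.toCSet))

/-- The coalgebra with countable carrier obtained by applying a lifting to `c`. -/
def CntMonadLifting.apply {B : SetFunctor} {T : CntMonad} (L : CntMonadLifting B T)
    (c : CBCoalg B) : CBCoalg B :=
  ⟨(T.obj c.toCSet).carrier, (T.obj c.toCSet).cnt, L.lift c⟩

/-- A monad on the category `Coalg(B)` of `B`-coalgebras, presented concretely. -/
structure BCoalgMonad (B : SetFunctor) where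
  obj : BCoalg B → BCoalg B
  map : {c d : BCoalg B} → (h : c.carrier → d.carrier) → IsCoalgHom B c.str d.str h →
    (obj c).carrier → (obj d).carrier
  map_hom : ∀ {c d : BCoalg B} (h : c.carrier → d.carrier)
    (hh : IsCoalgHom B c.str d.str h), IsCoalgHom B (obj c).str (obj d).str (map h hh)
  map_id : ∀ {c : BCoalg B}, map id (isCoalgHom_id B c.str) = id
  map_comp : ∀ {c d e : BCoalg B} (h₁ : c.carrier → d.carrier)
    (hh₁ : IsCoalgHom B c.str d.str h₁) (h₂ : d.carrier → e.carrier)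
    (hh₂ : IsCoalgHom B d.str e.str h₂),
    map (h₂ ∘ h₁) (isCoalgHom_comp B hh₁ hh₂) = map h₂ hh₂ ∘ map h₁ hh₁
  η : (c : BCoalg B) → c.carrier → (obj c).carrier
  η_hom : ∀ c : BCoalg B, IsCoalgHom B c.str (obj c).str (η c)
  μ : (c : BCoalg B) → (obj (obj c)).carrier → (obj c).carrier
  μ_hom : ∀ c : BCoalg B, IsCoalgHom B (obj (obj c)).str (obj c).str (μ c)
  η_nat : ∀ {c d : BCoalg B} (h : c.carrier → d.carrier)
    (hh : IsCoalgHom B c.str d.str h) (x : c.carrier), map h hh (η c x) = η d (h x)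
  μ_nat : ∀ {c d : BCoalg B} (h : c.carrier → d.carrier)
    (hh : IsCoalgHom B c.str d.str h) (t : (obj (obj c)).carrier),
    map h hh (μ c t) = μ d (map (map h hh) (map_hom h hh) t)
  left_unit : ∀ (c : BCoalg B) (t : (obj c).carrier), μ c (η (obj c) t) = t
  right_unit : ∀ (c : BCoalg B) (t : (obj c).carrier), μ c (map (η c) (η_hom c) t) = t
  assoc : ∀ (c : BCoalg B) (t : (obj (obj (obj c))).carrier),
    μ c (μ (obj c) t) = μ c (map (μ c) (μ_hom c) t)

/-- A monad `T` on `Set` extends the monad `Tc` on `cSet` along the inclusion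
`I : cSet → Set`: a natural isomorphism `α : I Tc ≅ T I` compatible with units
and multiplications. -/
def SetMonadExtends (Tc : CntMonad) (T : SetMonad) : Prop :=
  ∃ α : (X : CSet) → (Tc.obj X).carrier → T.obj X.carrier,
    (∀ X : CSet, Function.Bijective (α X)) ∧
    (∀ (X Y : CSet) (f : X.carrier → Y.carrier) (t : (Tc.obj X).carrier),
      α Y (Tc.map f t) = T.map f (α X t)) ∧
    (∀ (X : CSet) (x : X.carrier), α X (Tc.η x) = T.η x) ∧
    (∀ (X : CSet) (t : (Tc.obj (Tc.obj X)).carrier),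
      α X (Tc.μ t) = T.μ (T.map (α X) (α (Tc.obj X) t)))

/-- A monad `Tb` on `Coalg(B)` extends the lifted monad `T̄c` (given by the lifting
`L` of `Tc`) along the inclusion `Ī : Coalg_c(B) → Coalg(B)`: a natural
isomorphism of coalgebras compatible with units and multiplications. -/
def BCoalgMonadExtends (B : SetFunctor) (Tc : CntMonad) (L : CntMonadLifting B Tc)
    (Tb : BCoalgMonad B) : Prop :=
  ∃ (α : (c : CBCoalg B) → (Tc.obj c.toCSet).carrier → (Tb.obj c.toBCoalg).carrier)
    (hstr : ∀ c : CBCoalg B, IsCoalgHom B (L.lift c) (Tb.obj c.toBCoalg).str (α c)),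
    (∀ c : CBCoalg B, Function.Bijective (α c)) ∧
    (∀ (c d : CBCoalg B) (h : c.carrier → d.carrier) (hh : IsCoalgHom B c.str d.str h)
      (t : (Tc.obj c.toCSet).carrier), α d (Tc.map h t) = Tb.map h hh (α c t)) ∧
    (∀ (c : CBCoalg B) (x : c.carrier), α c (Tc.η x) = Tb.η c.toBCoalg x) ∧
    (∀ (c : CBCoalg B) (t : (Tc.obj (Tc.obj c.toCSet)).carrier),
      α c (Tc.μ t) =
        Tb.μ c.toBCoalg (Tb.map (α c) (hstr c) (α (L.apply c) t)))

/-- `Tb` is a lifting up to isomorphism of the `Set`-monad `T` to `Coalg(B)`: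
a natural isomorphism `β : U T̄ ≅ T U` compatible with units and multiplications. -/
def IsLiftingUpToIso (B : SetFunctor) (T : SetMonad) (Tb : BCoalgMonad B) : Prop :=
  ∃ β : (c : BCoalg B) → (Tb.obj c).carrier → T.obj c.carrier,
    (∀ c : BCoalg B, Function.Bijective (β c)) ∧
    (∀ (c d : BCoalg B) (h : c.carrier → d.carrier) (hh : IsCoalgHom B c.str d.str h)
      (t : (Tb.obj c).carrier), β d (Tb.map h hh t) = T.map h (β c t)) ∧
    (∀ (c : BCoalg B) (x : c.carrier), β c (Tb.η c x) = T.η x) ∧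
    (∀ (c : BCoalg B) (t : (Tb.obj (Tb.obj c)).carrier),
      β c (Tb.μ c t) = T.μ (T.map (β c) (β (Tb.obj c) t)))



namespace St14

variable (Tc : CntMonad)

/-- The `CSet` on a countable subset. -/
abbrev cs {X : Type} (S : Set X) (hS : S.Countable) : CSet :=
  ⟨↥S, hS.to_subtype⟩

/-- `Tc.map` with explicit objects. -/
abbrev tmap (A BB : CSet) (f : A.carrier → BB.carrier) :
    (Tc.obj A).carrier → (Tc.obj BB).carrier :=
  Tc.map (X := A) (Y := BB) f

lemma tmap_tmap (A BB CC : CSet) (f : A.carrier → BB.carrier)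
    (g : BB.carrier → CC.carrier) (t : (Tc.obj A).carrier) :
    tmap Tc BB CC g (tmap Tc A BB f t) = tmap Tc A CC (g ∘ f) t :=
  (congrFun (Tc.map_comp (X := A) (Y := BB) (Z := CC) f g) t).symm

lemma tmap_congr {A BB : CSet} {f g : A.carrier → BB.carrier}
    (h : ∀ a, f a = g a) (t : (Tc.obj A).carrier) :
    tmap Tc A BB f t = tmap Tc A BB g t := by
  rw [funext h]

lemma tmap_id {A : CSet} (t : (Tc.obj A).carrier) :
    tmap Tc A A id t = t := by
  unfold tmap; rw [Tc.map_id]; rfl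

/-- Presentation of an element of the extended monad. -/
structure Pre (Tc : CntMonad) (X : Type) where
  S : Set X
  hS : S.Countable
  t : (Tc.obj (cs S hS)).carrier

/-- The colimit relation. -/
def prel {X : Type} (p q : Pre Tc X) : Prop :=
  ∃ (V : Set X) (hV : V.Countable) (h1 : p.S ⊆ V) (h2 : q.S ⊆ V),
    tmap Tc (cs p.S p.hS) (cs V hV) (Set.inclusion h1) p.t
      = tmap Tc (cs q.S q.hS) (cs V hV) (Set.inclusion h2) q.t

lemma tmap_incl_incl {X : Type} {S V W : Set X} (hS : S.Countable) (hV : V.Countable)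
    (hW : W.Countable) (h1 : S ⊆ V) (h2 : V ⊆ W) (t : (Tc.obj (cs S hS)).carrier) :
    tmap Tc (cs V hV) (cs W hW) (Set.inclusion h2)
      (tmap Tc (cs S hS) (cs V hV) (Set.inclusion h1) t)
      = tmap Tc (cs S hS) (cs W hW) (Set.inclusion (h1.trans h2)) t := by
  rw [tmap_tmap]
  exact tmap_congr Tc (fun a => rfl) t

lemma prel_equiv {X : Type} : Equivalence (prel Tc (X := X)) := by
  constructor
  · intro p
    exact ⟨p.S, p.hS, subset_rfl, subset_rfl, rfl⟩
  · rintro p q ⟨V, hV, h1, h2, h⟩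
    exact ⟨V, hV, h2, h1, h.symm⟩
  · rintro p q r ⟨V, hV, h1, h2, h⟩ ⟨V', hV', h1', h2', h'⟩
    refine ⟨V ∪ V', hV.union hV', h1.trans Set.subset_union_left,
      h2'.trans Set.subset_union_right, ?_⟩
    have e1 := tmap_incl_incl Tc p.hS hV (hV.union hV') h1 Set.subset_union_left p.t
    have e2 := tmap_incl_incl Tc q.hS hV (hV.union hV') h2 Set.subset_union_left q.t
    have e3 := tmap_incl_incl Tc q.hS hV' (hV.union hV') h1' Set.subset_union_right q.t
    have e4 := tmap_incl_incl Tc r.hS hV' (hV.union hV') h2' Set.subset_union_right r.t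
    rw [← e1, h, e2, ← e3, h', e4]

def psetoid (X : Type) : Setoid (Pre Tc X) := ⟨prel Tc, prel_equiv Tc⟩

/-- The extended monad's underlying functor. -/
abbrev TT (X : Type) : Type := Quotient (psetoid Tc X)

def mk {X : Type} (S : Set X) (hS : S.Countable) (t : (Tc.obj (cs S hS)).carrier) :
    TT Tc X :=
  Quotient.mk (psetoid Tc X) ⟨S, hS, t⟩

lemma mk_eq {X : Type} {S S' V : Set X} (hS : S.Countable) (hS' : S'.Countable)
    (hV : V.Countable) (h1 : S ⊆ V) (h2 : S' ⊆ V) {t : (Tc.obj (cs S hS)).carrier}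
    {t' : (Tc.obj (cs S' hS')).carrier}
    (h : tmap Tc (cs S hS) (cs V hV) (Set.inclusion h1) t
      = tmap Tc (cs S' hS') (cs V hV) (Set.inclusion h2) t') :
    mk Tc S hS t = mk Tc S' hS' t' :=
  Quotient.sound ⟨V, hV, h1, h2, h⟩

lemma mk_incl {X : Type} {S V : Set X} (hS : S.Countable) (hV : V.Countable)
    (h : S ⊆ V) (t : (Tc.obj (cs S hS)).carrier) :
    mk Tc V hV (tmap Tc (cs S hS) (cs V hV) (Set.inclusion h) t) = mk Tc S hS t := by
  refine mk_eq Tc hV hS hV subset_rfl h ?_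
  rw [tmap_incl_incl]

/-- restriction of a map to the image of a subset -/
def rstr {X Y : Type} (f : X → Y) (S : Set X) : ↥S → ↥(f '' S) :=
  fun a => ⟨f a.1, Set.mem_image_of_mem f a.2⟩

def tmapF0 {X Y : Type} (f : X → Y) (p : Pre Tc X) : TT Tc Y :=
  mk Tc (f '' p.S) (p.hS.image f)
    (tmap Tc (cs p.S p.hS) (cs (f '' p.S) (p.hS.image f)) (rstr f p.S) p.t)

/-- The functor action on maps. -/
def tmapF {X Y : Type} (f : X → Y) : TT Tc X → TT Tc Y :=
  Quotient.lift (tmapF0 Tc f) (by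
    rintro p q ⟨V, hV, h1, h2, h⟩
    refine mk_eq Tc _ _ (hV.image f) (Set.image_mono (f := f) h1) (Set.image_mono (f := f) h2) ?_
    have e1 : ∀ (S : Set X) (hS : S.Countable) (hSV : S ⊆ V)
        (t : (Tc.obj (cs S hS)).carrier),
        tmap Tc (cs (f '' S) (hS.image f)) (cs (f '' V) (hV.image f))
            (Set.inclusion (Set.image_mono (f := f) hSV))
          (tmap Tc (cs S hS) (cs (f '' S) (hS.image f)) (rstr f S) t)
        = tmap Tc (cs V hV) (cs (f '' V) (hV.image f)) (rstr f V)
            (tmap Tc (cs S hS) (cs V hV) (Set.inclusion hSV) t) := by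
      intro S hS hSV t
      rw [tmap_tmap, tmap_tmap]
      exact tmap_congr Tc (fun a => rfl) t
    rw [e1 p.S p.hS h1 p.t, e1 q.S q.hS h2 q.t, h])

lemma tmapF_mk {X Y : Type} (f : X → Y) (S : Set X) (hS : S.Countable)
    (t : (Tc.obj (cs S hS)).carrier) :
    tmapF Tc f (mk Tc S hS t)
      = mk Tc (f '' S) (hS.image f)
          (tmap Tc (cs S hS) (cs (f '' S) (hS.image f)) (rstr f S) t) := rfl


/-- The unit. -/
def etaF {X : Type} (x : X) : TT Tc X :=
  mk Tc {x} (Set.countable_singleton x) (Tc.η (X := cs {x} (Set.countable_singleton x)) ⟨x, rfl⟩)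

lemma tmap_eta {A BB : CSet} (f : A.carrier → BB.carrier) (a : A.carrier) :
    tmap Tc A BB f (Tc.η (X := A) a) = Tc.η (X := BB) (f a) :=
  Tc.η_nat (X := A) (Y := BB) f a

lemma tmap_mu (A BB : CSet) (f : A.carrier → BB.carrier)
    (t : (Tc.obj (Tc.obj A)).carrier) :
    tmap Tc A BB f (Tc.μ (X := A) t)
      = Tc.μ (X := BB) (tmap Tc (Tc.obj A) (Tc.obj BB) (tmap Tc A BB f) t) :=
  Tc.μ_nat (X := A) (Y := BB) f t

lemma tmap_assoc (A : CSet) (t : (Tc.obj (Tc.obj (Tc.obj A))).carrier) :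
    Tc.μ (X := A) (Tc.μ (X := Tc.obj A) t)
      = Tc.μ (X := A) (tmap Tc (Tc.obj (Tc.obj A)) (Tc.obj A) (Tc.μ (X := A)) t) :=
  Tc.assoc (X := A) t

lemma eta_mk {X : Type} {S : Set X} (hS : S.Countable) (x : ↥S) :
    mk Tc S hS (Tc.η (X := cs S hS) x) = etaF Tc x.1 := by
  refine (mk_eq Tc hS (Set.countable_singleton x.1) hS subset_rfl
    (Set.singleton_subset_iff.mpr x.2) ?_).symm.symm
  rw [tmap_eta, tmap_eta]

/-- Lift data: a representation of a countable subset of `TT Tc X` inside one `Tc`-stage. -/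
structure LiftData {X : Type} (S : Set (TT Tc X)) (hS : S.Countable) where
  U : Set X
  hU : U.Countable
  τ : ↥S → (Tc.obj (cs U hU)).carrier
  isLift : ∀ q : ↥S, mk Tc U hU (τ q) = q.1

/-- Enlarging the target of a lift. -/
def LiftData.up {X : Type} {S : Set (TT Tc X)} {hS : S.Countable}
    (l : LiftData Tc S hS) {U' : Set X} (hU' : U'.Countable) (h : l.U ⊆ U') :
    LiftData Tc S hS :=
  ⟨U', hU', fun q => tmap Tc (cs l.U l.hU) (cs U' hU') (Set.inclusion h) (l.τ q),
    fun q => by rw [mk_incl]; exact l.isLift q⟩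

noncomputable def someLift {X : Type} (S : Set (TT Tc X)) (hS : S.Countable) :
    LiftData Tc S hS := by
  haveI : Countable ↥S := hS.to_subtype
  refine ⟨⋃ q : ↥S, (Quotient.out q.1).S, Set.countable_iUnion (fun q => (Quotient.out q.1).hS),
    fun q => tmap Tc (cs (Quotient.out q.1).S (Quotient.out q.1).hS) _
      (Set.inclusion (Set.subset_iUnion (fun (r : ↥S) => (Quotient.out r.1).S) q)) (Quotient.out q.1).t,
    fun q => ?_⟩
  rw [mk_incl]
  exact Quotient.out_eq q.1

lemma mu_congr {X : Type} (A : CSet) (t : (Tc.obj A).carrier) {U U' : Set X}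
    (hU : U.Countable) (hU' : U'.Countable)
    (τ : A.carrier → (Tc.obj (cs U hU)).carrier)
    (τ' : A.carrier → (Tc.obj (cs U' hU')).carrier)
    (h : ∀ a, mk Tc U hU (τ a) = mk Tc U' hU' (τ' a)) :
    mk Tc U hU (Tc.μ (X := cs U hU) (tmap Tc A (Tc.obj (cs U hU)) τ t))
      = mk Tc U' hU' (Tc.μ (X := cs U' hU') (tmap Tc A (Tc.obj (cs U' hU')) τ' t)) := by
  haveI : Countable A.carrier := A.cnt
  have hV : ∀ a : A.carrier, ∃ (V : Set X) (hV : V.Countable) (h1 : U ⊆ V) (h2 : U' ⊆ V),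
      tmap Tc (cs U hU) (cs V hV) (Set.inclusion h1) (τ a)
        = tmap Tc (cs U' hU') (cs V hV) (Set.inclusion h2) (τ' a) :=
    fun a => Quotient.exact (h a)
  choose V cV i1 i2 hVeq using hV
  set W : Set X := (U ∪ U') ∪ ⋃ a, V a with hWdef
  have hW : W.Countable := ((hU.union hU').union (Set.countable_iUnion cV))
  have hUW : U ⊆ W := Set.subset_union_left.trans Set.subset_union_left
  have hU'W : U' ⊆ W := Set.subset_union_right.trans Set.subset_union_left
  have hVW : ∀ a, V a ⊆ W := fun a =>
    (Set.subset_iUnion V a).trans Set.subset_union_right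
  have key : ∀ a, tmap Tc (cs U hU) (cs W hW) (Set.inclusion hUW) (τ a)
      = tmap Tc (cs U' hU') (cs W hW) (Set.inclusion hU'W) (τ' a) := by
    intro a
    rw [← tmap_incl_incl Tc hU (cV a) hW (i1 a) (hVW a) (τ a),
      ← tmap_incl_incl Tc hU' (cV a) hW (i2 a) (hVW a) (τ' a), hVeq a]
  have muincl : ∀ (U₀ : Set X) (hU₀ : U₀.Countable) (hsub : U₀ ⊆ W)
      (τ₀ : A.carrier → (Tc.obj (cs U₀ hU₀)).carrier),
      mk Tc U₀ hU₀ (Tc.μ (X := cs U₀ hU₀) (tmap Tc A (Tc.obj (cs U₀ hU₀)) τ₀ t))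
        = mk Tc W hW (Tc.μ (X := cs W hW) (tmap Tc A (Tc.obj (cs W hW))
            (fun a => tmap Tc (cs U₀ hU₀) (cs W hW) (Set.inclusion hsub) (τ₀ a)) t)) := by
    intro U₀ hU₀ hsub τ₀
    rw [← mk_incl Tc hU₀ hW hsub]
    congr 1
    have := Tc.μ_nat (X := cs U₀ hU₀) (Y := cs W hW) (Set.inclusion hsub)
      (tmap Tc A (Tc.obj (cs U₀ hU₀)) τ₀ t)
    refine (this.trans ?_)
    congr 1
    exact tmap_tmap Tc _ _ _ τ₀ (Tc.map (X := cs U₀ hU₀) (Y := cs W hW) (Set.inclusion hsub)) t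
  rw [muincl U hU hUW τ, muincl U' hU' hU'W τ']
  exact congrArg (fun g => mk Tc W hW (Tc.μ (X := cs W hW)
    (tmap Tc A (Tc.obj (cs W hW)) g t))) (funext key)

noncomputable def muF0 {X : Type} (p : Pre Tc (TT Tc X)) : TT Tc X :=
  mk Tc (someLift Tc p.S p.hS).U (someLift Tc p.S p.hS).hU
    (Tc.μ (X := cs (someLift Tc p.S p.hS).U (someLift Tc p.S p.hS).hU)
      (tmap Tc (cs p.S p.hS) (Tc.obj (cs (someLift Tc p.S p.hS).U (someLift Tc p.S p.hS).hU))
        (someLift Tc p.S p.hS).τ p.t))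

lemma muF0_eq {X : Type} (p : Pre Tc (TT Tc X)) (l : LiftData Tc p.S p.hS) :
    muF0 Tc p = mk Tc l.U l.hU (Tc.μ (X := cs l.U l.hU)
      (tmap Tc (cs p.S p.hS) (Tc.obj (cs l.U l.hU)) l.τ p.t)) :=
  mu_congr Tc (cs p.S p.hS) p.t (someLift Tc p.S p.hS).hU l.hU
    (someLift Tc p.S p.hS).τ l.τ
    (fun a => ((someLift Tc p.S p.hS).isLift a).trans (l.isLift a).symm)

/-- The multiplication. -/
noncomputable def muF {X : Type} : TT Tc (TT Tc X) → TT Tc X :=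
  Quotient.lift (muF0 Tc) (by
    rintro p q ⟨V, hV, h1, h2, heq⟩
    have l := someLift Tc V hV
    rw [muF0_eq Tc p ⟨l.U, l.hU, fun a => l.τ (Set.inclusion h1 a),
        fun a => l.isLift (Set.inclusion h1 a)⟩,
      muF0_eq Tc q ⟨l.U, l.hU, fun a => l.τ (Set.inclusion h2 a),
        fun a => l.isLift (Set.inclusion h2 a)⟩]
    refine congrArg (fun z => mk Tc l.U l.hU (Tc.μ (X := cs l.U l.hU) z)) ?_
    show tmap Tc (cs p.S p.hS) (Tc.obj (cs l.U l.hU)) (l.τ ∘ Set.inclusion h1) p.t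
      = tmap Tc (cs q.S q.hS) (Tc.obj (cs l.U l.hU)) (l.τ ∘ Set.inclusion h2) q.t
    rw [← tmap_tmap Tc (cs p.S p.hS) (cs V hV) (Tc.obj (cs l.U l.hU)) (Set.inclusion h1) l.τ p.t,
      ← tmap_tmap Tc (cs q.S q.hS) (cs V hV) (Tc.obj (cs l.U l.hU)) (Set.inclusion h2) l.τ q.t, heq])

/-- Master lemma: compute `muF` with any lift. -/
lemma muF_mk {X : Type} (S : Set (TT Tc X)) (hS : S.Countable)
    (t : (Tc.obj (cs S hS)).carrier) (l : LiftData Tc S hS) :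
    muF Tc (mk Tc S hS t) = mk Tc l.U l.hU (Tc.μ (X := cs l.U l.hU)
      (tmap Tc (cs S hS) (Tc.obj (cs l.U l.hU)) l.τ t)) :=
  muF0_eq Tc ⟨S, hS, t⟩ l

lemma tmapF_id {X : Type} : tmapF Tc (id : X → X) = id := by
  funext t
  induction t using Quotient.inductionOn with
  | h p =>
    show tmapF Tc id (mk Tc p.S p.hS p.t) = mk Tc p.S p.hS p.t
    rw [tmapF_mk]
    refine mk_eq Tc _ p.hS p.hS (le_of_eq (Set.image_id p.S)) subset_rfl ?_
    rw [tmap_tmap]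
    exact tmap_congr Tc (fun a => rfl) p.t

lemma tmapF_comp {X Y Z : Type} (f : X → Y) (g : Y → Z) :
    tmapF Tc (g ∘ f) = tmapF Tc g ∘ tmapF Tc f := by
  funext t
  induction t using Quotient.inductionOn with
  | h p =>
    show tmapF Tc (g ∘ f) (mk Tc p.S p.hS p.t)
      = tmapF Tc g (tmapF Tc f (mk Tc p.S p.hS p.t))
    rw [tmapF_mk, tmapF_mk, tmapF_mk]
    refine mk_eq Tc _ _ ((p.hS.image f).image g) (le_of_eq (Set.image_comp g f p.S))
      subset_rfl ?_
    rw [tmap_tmap, tmap_tmap, tmap_tmap]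
    exact tmap_congr Tc (fun a => rfl) p.t

lemma eta_natF {X Y : Type} (f : X → Y) (x : X) :
    tmapF Tc f (etaF Tc x) = etaF Tc (f x) := by
  show tmapF Tc f (mk Tc {x} (Set.countable_singleton x) _) = _
  rw [tmapF_mk, tmap_eta]
  exact eta_mk Tc _ (rstr f {x} ⟨x, rfl⟩)

lemma mu_natF {X Y : Type} (f : X → Y) (t : TT Tc (TT Tc X)) :
    tmapF Tc f (muF Tc t) = muF Tc (tmapF Tc (tmapF Tc f) t) := by
  induction t using Quotient.inductionOn with
  | h p =>
    have l := someLift Tc p.S p.hS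
    have l' := someLift Tc (tmapF Tc f '' p.S) (p.hS.image (tmapF Tc f))
    show tmapF Tc f (muF Tc (mk Tc p.S p.hS p.t))
      = muF Tc (tmapF Tc (tmapF Tc f) (mk Tc p.S p.hS p.t))
    rw [muF_mk Tc p.S p.hS p.t l, tmapF_mk, tmapF_mk, muF_mk Tc _ _ _ l']
    have lhs : tmap Tc (cs l.U l.hU) (cs (f '' l.U) (l.hU.image f)) (rstr f l.U)
        (Tc.μ (X := cs l.U l.hU) (tmap Tc (cs p.S p.hS) (Tc.obj (cs l.U l.hU)) l.τ p.t))
        = Tc.μ (X := cs (f '' l.U) (l.hU.image f))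
            (tmap Tc (cs p.S p.hS) (Tc.obj (cs (f '' l.U) (l.hU.image f)))
              (fun a => tmap Tc (cs l.U l.hU) (cs (f '' l.U) (l.hU.image f))
                (rstr f l.U) (l.τ a)) p.t) := by
      refine (tmap_mu Tc (cs l.U l.hU) (cs (f '' l.U) (l.hU.image f)) (rstr f l.U)
        (tmap Tc (cs p.S p.hS) (Tc.obj (cs l.U l.hU)) l.τ p.t)).trans ?_
      rw [tmap_tmap]
      rfl
    rw [lhs]
    have rhs : tmap Tc (cs (tmapF Tc f '' p.S) (p.hS.image (tmapF Tc f)))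
        (Tc.obj (cs l'.U l'.hU)) l'.τ
        (tmap Tc (cs p.S p.hS) (cs (tmapF Tc f '' p.S) (p.hS.image (tmapF Tc f)))
          (rstr (tmapF Tc f) p.S) p.t)
        = tmap Tc (cs p.S p.hS) (Tc.obj (cs l'.U l'.hU))
            (fun a => l'.τ (rstr (tmapF Tc f) p.S a)) p.t := by
      rw [tmap_tmap]; rfl
    rw [rhs]
    refine mu_congr Tc (cs p.S p.hS) p.t (l.hU.image f) l'.hU _ _ (fun a => ?_)
    rw [l'.isLift (rstr (tmapF Tc f) p.S a)]
    show _ = tmapF Tc f a.1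
    rw [← l.isLift a, tmapF_mk]

lemma left_unitF {X : Type} (t : TT Tc X) : muF Tc (etaF Tc t) = t := by
  induction t using Quotient.inductionOn with
  | h p =>
    show muF Tc (mk Tc {mk Tc p.S p.hS p.t} _ _) = mk Tc p.S p.hS p.t
    erw [muF_mk Tc {mk Tc p.S p.hS p.t} (Set.countable_singleton _) _ ⟨p.S, p.hS, fun _ => p.t, fun q => by
      have hq : q.1 = mk Tc p.S p.hS p.t := Set.mem_singleton_iff.mp q.2
      rw [hq]⟩]
    erw [tmap_eta]
    show mk Tc p.S p.hS (Tc.μ (X := cs p.S p.hS) (Tc.η (X := Tc.obj (cs p.S p.hS)) p.t)) = _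
    rw [Tc.left_unit]

lemma right_unitF {X : Type} (t : TT Tc X) : muF Tc (tmapF Tc (etaF Tc) t) = t := by
  induction t using Quotient.inductionOn with
  | h p =>
    have l := someLift Tc (etaF Tc '' p.S) (p.hS.image (etaF Tc))
    show muF Tc (tmapF Tc (etaF Tc) (mk Tc p.S p.hS p.t)) = mk Tc p.S p.hS p.t
    rw [tmapF_mk, muF_mk Tc _ _ _ l]
    have step : mk Tc l.U l.hU (Tc.μ (X := cs l.U l.hU)
        (tmap Tc (cs (etaF Tc '' p.S) (p.hS.image (etaF Tc))) (Tc.obj (cs l.U l.hU)) l.τ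
          (tmap Tc (cs p.S p.hS) (cs (etaF Tc '' p.S) (p.hS.image (etaF Tc)))
            (rstr (etaF Tc) p.S) p.t)))
        = mk Tc p.S p.hS (Tc.μ (X := cs p.S p.hS)
            (tmap Tc (cs p.S p.hS) (Tc.obj (cs p.S p.hS))
              (Tc.η (X := cs p.S p.hS)) p.t)) := by
      rw [tmap_tmap]
      exact mu_congr Tc (cs p.S p.hS) p.t l.hU p.hS _ _
        (fun a => (l.isLift (rstr (etaF Tc) p.S a)).trans (eta_mk Tc p.hS a).symm)
    rw [step, Tc.right_unit]

lemma assocF {X : Type} (t : TT Tc (TT Tc (TT Tc X))) :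
    muF Tc (muF Tc t) = muF Tc (tmapF Tc (muF Tc) t) := by
  induction t using Quotient.inductionOn with
  | h p =>
    have l := someLift Tc p.S p.hS
    have m := someLift Tc l.U l.hU
    have l'' := someLift Tc (muF Tc '' p.S) (p.hS.image (muF Tc))
    show muF Tc (muF Tc (mk Tc p.S p.hS p.t)) = muF Tc (tmapF Tc (muF Tc) (mk Tc p.S p.hS p.t))
    rw [muF_mk Tc p.S p.hS p.t l, muF_mk Tc l.U l.hU _ m, tmapF_mk, muF_mk Tc _ _ _ l'']
    have lhs : Tc.μ (X := cs m.U m.hU) (tmap Tc (cs l.U l.hU) (Tc.obj (cs m.U m.hU)) m.τ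
        (Tc.μ (X := cs l.U l.hU) (tmap Tc (cs p.S p.hS) (Tc.obj (cs l.U l.hU)) l.τ p.t)))
        = Tc.μ (X := cs m.U m.hU) (tmap Tc (cs p.S p.hS) (Tc.obj (cs m.U m.hU))
            (fun a => Tc.μ (X := cs m.U m.hU)
              (tmap Tc (cs l.U l.hU) (Tc.obj (cs m.U m.hU)) m.τ (l.τ a))) p.t) := by
      refine (congrArg (Tc.μ (X := cs m.U m.hU)) (tmap_mu Tc (cs l.U l.hU)
        (Tc.obj (cs m.U m.hU)) m.τ
        (tmap Tc (cs p.S p.hS) (Tc.obj (cs l.U l.hU)) l.τ p.t))).trans ?_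
      refine (tmap_assoc Tc (cs m.U m.hU) _).trans ?_
      rw [tmap_tmap, tmap_tmap]
      rfl
    rw [lhs]
    have rhs : Tc.μ (X := cs l''.U l''.hU)
        (tmap Tc (cs (muF Tc '' p.S) (p.hS.image (muF Tc))) (Tc.obj (cs l''.U l''.hU)) l''.τ
          (tmap Tc (cs p.S p.hS) (cs (muF Tc '' p.S) (p.hS.image (muF Tc)))
            (rstr (muF Tc) p.S) p.t))
        = Tc.μ (X := cs l''.U l''.hU) (tmap Tc (cs p.S p.hS) (Tc.obj (cs l''.U l''.hU))
            (fun a => l''.τ (rstr (muF Tc) p.S a)) p.t) := by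
      rw [tmap_tmap]; rfl
    rw [rhs]
    refine (mu_congr Tc (cs p.S p.hS) p.t m.hU l''.hU _ _ (fun a => ?_)).symm.symm
    rw [l''.isLift (rstr (muF Tc) p.S a)]
    show mk Tc m.U m.hU _ = muF Tc a.1
    rw [← l.isLift a, muF_mk Tc l.U l.hU (l.τ a) m]

/-- The extended monad on `Set`. -/
noncomputable def bigT : SetMonad where
  obj := TT Tc
  map := fun f => tmapF Tc f
  map_id := tmapF_id Tc
  map_comp := fun f g => tmapF_comp Tc f g
  η := fun x => etaF Tc x
  μ := fun t => muF Tc t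
  η_nat := fun f x => eta_natF Tc f x
  μ_nat := fun f t => mu_natF Tc f t
  left_unit := fun t => left_unitF Tc t
  right_unit := fun t => right_unitF Tc t
  assoc := fun t => assocF Tc t

lemma cnt_univ (X : CSet) : (Set.univ : Set X.carrier).Countable := by
  haveI := X.cnt; exact Set.countable_univ

/-- The comparison map `Tc X → T X`. -/
def alph (X : CSet) : (Tc.obj X).carrier → TT Tc X.carrier := fun t =>
  mk Tc Set.univ (cnt_univ X)
    (tmap Tc X (cs Set.univ (cnt_univ X)) (fun x => ⟨x, trivial⟩) t)

lemma alph_inj (X : CSet) : Function.Injective (alph Tc X) := by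
  intro t t' h
  obtain ⟨V, hV, h1, h2, heq⟩ := Quotient.exact h
  have r : ∀ (hh : (Set.univ : Set X.carrier) ⊆ V) (z : (Tc.obj X).carrier),
      tmap Tc (cs V hV) X Subtype.val
        (tmap Tc (cs Set.univ (cnt_univ X)) (cs V hV) (Set.inclusion hh)
          (tmap Tc X (cs Set.univ (cnt_univ X)) (fun x => ⟨x, trivial⟩) z)) = z := by
    intro hh z
    rw [tmap_tmap, tmap_tmap]
    exact (tmap_congr Tc (g := id) (fun a => rfl) z).trans (tmap_id Tc z)
  have := congrArg (tmap Tc (cs V hV) X Subtype.val) heq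
  rw [r h1 t, r h2 t'] at this
  exact this

lemma alph_surj (X : CSet) : Function.Surjective (alph Tc X) := by
  intro q
  induction q using Quotient.inductionOn with
  | h p =>
    refine ⟨tmap Tc (cs p.S p.hS) X Subtype.val p.t, ?_⟩
    show mk Tc Set.univ (cnt_univ X) _ = mk Tc p.S p.hS p.t
    rw [tmap_tmap]
    have e : tmap Tc (cs p.S p.hS) (cs Set.univ (cnt_univ X))
        ((fun x => (⟨x, trivial⟩ : ↥(Set.univ : Set X.carrier))) ∘ Subtype.val) p.t
        = tmap Tc (cs p.S p.hS) (cs Set.univ (cnt_univ X))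
            (Set.inclusion (Set.subset_univ p.S)) p.t :=
      tmap_congr Tc (fun a => rfl) p.t
    rw [e]
    exact mk_incl Tc p.hS (cnt_univ X) (Set.subset_univ p.S) p.t

lemma alph_nat (X Y : CSet) (f : X.carrier → Y.carrier) (t : (Tc.obj X).carrier) :
    alph Tc Y (tmap Tc X Y f t) = tmapF Tc f (alph Tc X t) := by
  show mk Tc Set.univ (cnt_univ Y) _ = tmapF Tc f (mk Tc Set.univ (cnt_univ X) _)
  rw [tmapF_mk]
  refine (mk_eq Tc (cnt_univ Y) ((cnt_univ X).image f) (cnt_univ Y) subset_rfl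
    (Set.subset_univ _) ?_)
  simp only [tmap_tmap]
  exact tmap_congr Tc (fun a => rfl) t

lemma alph_eta (X : CSet) (x : X.carrier) :
    alph Tc X (Tc.η (X := X) x) = etaF Tc x := by
  show mk Tc Set.univ (cnt_univ X) _ = _
  rw [tmap_eta]
  exact eta_mk Tc (cnt_univ X) ⟨x, trivial⟩

lemma alph_mu (X : CSet) (t : (Tc.obj (Tc.obj X)).carrier) :
    alph Tc X (Tc.μ (X := X) t)
      = muF Tc (tmapF Tc (alph Tc X) (alph Tc (Tc.obj X) t)) := by
  have l := someLift Tc (alph Tc X '' (Set.univ : Set (Tc.obj X).carrier))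
    ((cnt_univ (Tc.obj X)).image (alph Tc X))
  show mk Tc Set.univ (cnt_univ X) _
    = muF Tc (tmapF Tc (alph Tc X) (mk Tc Set.univ (cnt_univ (Tc.obj X)) _))
  rw [tmapF_mk, muF_mk Tc _ _ _ l, tmap_tmap, tmap_tmap]
  refine Eq.trans (congrArg (mk Tc Set.univ (cnt_univ X))
    (tmap_mu Tc X (cs Set.univ (cnt_univ X)) (fun x => ⟨x, trivial⟩) t)) ?_
  exact mu_congr Tc (Tc.obj X) t (cnt_univ X) l.hU _ _
    (fun a => (l.isLift (rstr (alph Tc X) Set.univ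
      ⟨a, trivial⟩)).symm)

/-! ### Coalgebra part -/

variable (B : SetFunctor)

lemma bmap_bmap {X Y Z : Type} (f : X → Y) (g : Y → Z) (x : B.obj X) :
    B.map g (B.map f x) = B.map (g ∘ f) x :=
  (congrFun (B.map_comp f g) x).symm

lemma bmap_inj_of_retr {X Y : Type} {f : X → Y} (g : Y → X) (hg : ∀ x, g (f x) = x) :
    Function.Injective (B.map f) := by
  intro a b h
  have := congrArg (B.map g) h
  rw [bmap_bmap, bmap_bmap] at this
  have hgf : g ∘ f = id := funext hg
  rw [hgf, B.map_id] at this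
  exact this

variable (hacc : B.CountablyAccessible)

lemma pt_exists (hacc : B.CountablyAccessible) (co : BCoalg B) (x : co.carrier) :
    ∃ N : Set co.carrier, N.Countable ∧ ∃ b : B.obj ↥N, B.map Subtype.val b = co.str x := by
  obtain ⟨Y, cntY, i, hi, y, hy⟩ := hacc co.carrier (co.str x)
  haveI := cntY
  refine ⟨Set.range i, Set.countable_range i, B.map (Set.rangeFactorization i) y, ?_⟩
  rw [bmap_bmap]
  exact hy

noncomputable def ptN (co : BCoalg B) (x : co.carrier) : Set co.carrier :=
  (pt_exists B hacc co x).choose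

lemma ptN_cnt (co : BCoalg B) (x : co.carrier) : (ptN B hacc co x).Countable :=
  (pt_exists B hacc co x).choose_spec.1

noncomputable def ptb (co : BCoalg B) (x : co.carrier) : B.obj ↥(ptN B hacc co x) :=
  (pt_exists B hacc co x).choose_spec.2.choose

lemma ptb_spec (co : BCoalg B) (x : co.carrier) :
    B.map Subtype.val (ptb B hacc co x) = co.str x :=
  (pt_exists B hacc co x).choose_spec.2.choose_spec

/-- A subset closed under the chosen supports. -/
def Closed (co : BCoalg B) (W : Set co.carrier) : Prop :=
  ∀ x, x ∈ W → ptN B hacc co x ⊆ W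

/-- The canonical coalgebra structure on a closed subset. -/
noncomputable def sg (co : BCoalg B) (W : Set co.carrier) (hW : Closed B hacc co W) :
    ↥W → B.obj ↥W :=
  fun w => B.map (Set.inclusion (hW w.1 w.2)) (ptb B hacc co w.1)

lemma sg_spec (co : BCoalg B) (W : Set co.carrier) (hW : Closed B hacc co W) (w : ↥W) :
    B.map Subtype.val (sg B hacc co W hW w) = co.str w.1 := by
  unfold sg
  rw [bmap_bmap]
  exact ptb_spec B hacc co w.1

def cstep (co : BCoalg B) (A : Set co.carrier) : Set co.carrier :=
  A ∪ ⋃ x ∈ A, ptN B hacc co x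

noncomputable def clo (co : BCoalg B) (S : Set co.carrier) : Set co.carrier :=
  ⋃ n, (cstep B hacc co)^[n] S

lemma subset_clo (co : BCoalg B) (S : Set co.carrier) : S ⊆ clo B hacc co S :=
  le_of_eq (Function.iterate_zero_apply (cstep B hacc co) S).symm |>.trans
    (Set.subset_iUnion (fun n => (cstep B hacc co)^[n] S) 0)

lemma clo_cnt (co : BCoalg B) (S : Set co.carrier) (hS : S.Countable) :
    (clo B hacc co S).Countable := by
  refine Set.countable_iUnion (fun n => ?_)
  induction n with
  | zero => simpa using hS
  | succ n ih =>
    rw [Function.iterate_succ_apply']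
    exact ih.union (ih.biUnion (fun x _ => ptN_cnt B hacc co x))

lemma clo_closed (co : BCoalg B) (S : Set co.carrier) :
    Closed B hacc co (clo B hacc co S) := by
  intro x hx
  obtain ⟨A, ⟨n, rfl⟩, hxA⟩ := hx
  refine subset_trans ?_ (Set.subset_iUnion (fun n => (cstep B hacc co)^[n] S) (n + 1))
  rw [Function.iterate_succ_apply']
  exact (Set.subset_biUnion_of_mem hxA).trans Set.subset_union_right

lemma hom_into_sub (co : BCoalg B) {A : Type} {a : A → B.obj A} {W : Set co.carrier}
    {σ : ↥W → B.obj ↥W} (hσ : ∀ w, B.map Subtype.val (σ w) = co.str w.1)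
    (f : A → ↥W) (hf : ∀ x, B.map (fun y => (f y).1) (a x) = co.str (f x).1) :
    IsCoalgHom B a σ f := by
  intro x
  have hne : W.Nonempty := ⟨(f x).1, (f x).2⟩
  haveI : ∀ y : co.carrier, Decidable (y ∈ W) := fun y => Classical.propDecidable _
  have hv : Function.Injective (B.map (Subtype.val : ↥W → co.carrier)) :=
    bmap_inj_of_retr B
      (fun y => if h : y ∈ W then (⟨y, h⟩ : ↥W) else ⟨hne.choose, hne.choose_spec⟩)
      (fun w => show dite ((w : co.carrier) ∈ W) (fun h => (⟨w.1, h⟩ : ↥W))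
        (fun _ => ⟨hne.choose, hne.choose_spec⟩) = w from by rw [dif_pos w.2])
  apply hv
  rw [bmap_bmap]
  exact (hf x).trans (hσ (f x)).symm

lemma bmap_congr {X Y : Type} {f g : X → Y} (h : ∀ x, f x = g x) (z : B.obj X) :
    B.map f z = B.map g z := by rw [funext h]

/-- The canonical countable subcoalgebra on a closed countable subset. -/
noncomputable abbrev dW (co : BCoalg B) (W : Set co.carrier) (hWc : W.Countable)
    (hW : Closed B hacc co W) : CBCoalg B :=
  ⟨↥W, hWc.to_subtype, sg B hacc co W hW⟩

variable (L : CntMonadLifting B Tc)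

/-- The value of the lifted structure map on a representative. -/
noncomputable def strVal (co : BCoalg B) {S W : Set co.carrier} (hS : S.Countable)
    (t : (Tc.obj (cs S hS)).carrier) (hWc : W.Countable) (hW : Closed B hacc co W)
    (hSW : S ⊆ W) : B.obj (TT Tc co.carrier) :=
  B.map (fun u => mk Tc W hWc u)
    (L.lift (dW B hacc co W hWc hW)
      (tmap Tc (cs S hS) (cs W hWc) (Set.inclusion hSW) t))

lemma strVal_up (co : BCoalg B) {S W W' : Set co.carrier} (hS : S.Countable)
    (t : (Tc.obj (cs S hS)).carrier) (hWc : W.Countable) (hW : Closed B hacc co W)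
    (hSW : S ⊆ W) (hW'c : W'.Countable) (hW' : Closed B hacc co W') (hWW' : W ⊆ W') :
    strVal Tc B hacc L co hS t hWc hW hSW
      = strVal Tc B hacc L co hS t hW'c hW' (hSW.trans hWW') := by
  have hhom : IsCoalgHom B (sg B hacc co W hW) (sg B hacc co W' hW')
      (Set.inclusion hWW') :=
    hom_into_sub B co (sg_spec B hacc co W' hW') (Set.inclusion hWW')
      (fun x => sg_spec B hacc co W hW x)
  have lhom := L.map_hom (dW B hacc co W hWc hW) (dW B hacc co W' hW'c hW')
    (Set.inclusion hWW') hhom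
  unfold strVal
  refine Eq.trans (bmap_congr B (fun u => (mk_incl Tc hWc hW'c hWW' u).symm) _) ?_
  refine Eq.trans (bmap_bmap B (tmap Tc (cs W hWc) (cs W' hW'c) (Set.inclusion hWW'))
    (fun u => mk Tc W' hW'c u)
    (L.lift (dW B hacc co W hWc hW)
      (tmap Tc (cs S hS) (cs W hWc) (Set.inclusion hSW) t))).symm ?_
  refine Eq.trans (congrArg (B.map (fun u => mk Tc W' hW'c u)) (lhom _)) ?_
  exact congrArg (B.map _) (congrArg (L.lift _)
    (tmap_incl_incl Tc hS hWc hW'c hSW hWW' t))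

lemma strVal_welldef (co : BCoalg B) (p q : Pre Tc co.carrier) (hpq : prel Tc p q)
    {W W' : Set co.carrier} (hWc : W.Countable) (hW : Closed B hacc co W)
    (hSW : p.S ⊆ W) (hW'c : W'.Countable) (hW' : Closed B hacc co W')
    (hS'W' : q.S ⊆ W') :
    strVal Tc B hacc L co p.hS p.t hWc hW hSW
      = strVal Tc B hacc L co q.hS q.t hW'c hW' hS'W' := by
  obtain ⟨V, hV, h1, h2, heq⟩ := hpq
  have hW''c := clo_cnt B hacc co (W ∪ W' ∪ V) ((hWc.union hW'c).union hV)
  have hW''cl := clo_closed B hacc co (W ∪ W' ∪ V)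
  have hsub := subset_clo B hacc co (W ∪ W' ∪ V)
  have hWsub : W ⊆ clo B hacc co (W ∪ W' ∪ V) :=
    (Set.subset_union_left.trans Set.subset_union_left).trans hsub
  have hW'sub : W' ⊆ clo B hacc co (W ∪ W' ∪ V) :=
    (Set.subset_union_right.trans Set.subset_union_left).trans hsub
  have hVsub : V ⊆ clo B hacc co (W ∪ W' ∪ V) := Set.subset_union_right.trans hsub
  rw [strVal_up Tc B hacc L co p.hS p.t hWc hW hSW hW''c hW''cl hWsub,
    strVal_up Tc B hacc L co q.hS q.t hW'c hW' hS'W' hW''c hW''cl hW'sub]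
  have key : tmap Tc (cs p.S p.hS) (cs (clo B hacc co (W ∪ W' ∪ V)) hW''c)
      (Set.inclusion (hSW.trans hWsub)) p.t
      = tmap Tc (cs q.S q.hS) (cs (clo B hacc co (W ∪ W' ∪ V)) hW''c)
          (Set.inclusion (hS'W'.trans hW'sub)) q.t := by
    rw [← tmap_incl_incl Tc p.hS hV hW''c h1 hVsub p.t,
      ← tmap_incl_incl Tc q.hS hV hW''c h2 hVsub q.t, heq]
  exact congrArg (B.map _) (congrArg (L.lift _) key)

/-- The lifted coalgebra structure on `TT Tc C`. -/
noncomputable def strT (co : BCoalg B) : TT Tc co.carrier → B.obj (TT Tc co.carrier) :=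
  Quotient.lift (fun p => strVal Tc B hacc L co p.hS p.t
      (clo_cnt B hacc co p.S p.hS) (clo_closed B hacc co p.S) (subset_clo B hacc co p.S))
    (fun p q h => strVal_welldef Tc B hacc L co p q h _ _ _ _ _ _)

lemma strT_mk (co : BCoalg B) {S W : Set co.carrier} (hS : S.Countable)
    (t : (Tc.obj (cs S hS)).carrier) (hWc : W.Countable) (hW : Closed B hacc co W)
    (hSW : S ⊆ W) :
    strT Tc B hacc L co (mk Tc S hS t) = strVal Tc B hacc L co hS t hWc hW hSW :=
  strVal_welldef Tc B hacc L co ⟨S, hS, t⟩ ⟨S, hS, t⟩ ((prel_equiv Tc).refl _)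
    _ _ _ _ _ _

lemma tmap_incl_refl {X : Type} {U : Set X} (hUc : U.Countable)
    (z : (Tc.obj (cs U hUc)).carrier) :
    tmap Tc (cs U hUc) (cs U hUc) (Set.inclusion subset_rfl) z = z :=
  (tmap_congr Tc (g := id) (fun a => rfl) z).trans (tmap_id Tc z)

lemma mk_inj {X : Type} {U : Set X} (hUc : U.Countable)
    (hne : U.Nonempty ∨ IsEmpty X) :
    Function.Injective (fun u => mk Tc U hUc u) := by
  intro u u' h
  obtain ⟨V, hV, h1, h2, heq⟩ := Quotient.exact h
  have hrr : ∃ r : ↥V → ↥U, ∀ (hh : U ⊆ V) (z : ↥U), r (Set.inclusion hh z) = z := by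
    rcases hne with hne | hemp
    · haveI : ∀ y : X, Decidable (y ∈ U) := fun y => Classical.propDecidable _
      refine ⟨fun v => if h : v.1 ∈ U then ⟨v.1, h⟩ else ⟨hne.choose, hne.choose_spec⟩,
        fun hh z => ?_⟩
      show dite ((z : X) ∈ U) (fun h => (⟨z.1, h⟩ : ↥U))
        (fun _ => ⟨hne.choose, hne.choose_spec⟩) = z
      rw [dif_pos z.2]
    · exact ⟨fun v => (hemp.elim v.1), fun hh z => (hemp.elim z.1)⟩
  obtain ⟨r, hr⟩ := hrr
  have e1 := congrArg (tmap Tc (cs V hV) (cs U hUc) r) heq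
  rw [tmap_tmap, tmap_tmap] at e1
  have c1 : tmap Tc (cs U hUc) (cs U hUc) (r ∘ Set.inclusion h1) u = u :=
    (tmap_congr Tc (g := id) (fun a => hr h1 a) u).trans (tmap_id Tc u)
  have c2 : tmap Tc (cs U hUc) (cs U hUc) (r ∘ Set.inclusion h2) u' = u' :=
    (tmap_congr Tc (g := id) (fun a => hr h2 a) u').trans (tmap_id Tc u')
  exact c1.symm.trans (e1.trans c2)

/-- The lifted coalgebra `(T C, strT)`. -/
noncomputable abbrev TbObj (co : BCoalg B) : BCoalg B :=
  ⟨TT Tc co.carrier, strT Tc B hacc L co⟩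

noncomputable def pad (co : BCoalg B) : Set co.carrier :=
  @dite _ (Nonempty co.carrier) (Classical.propDecidable _) (fun h => {h.some}) (fun _ => ∅)

lemma pad_cnt (co : BCoalg B) : (pad B co).Countable := by
  unfold pad
  split
  · exact Set.countable_singleton _
  · exact Set.countable_empty

lemma pad_ne (co : BCoalg B) : (pad B co).Nonempty ∨ IsEmpty co.carrier := by
  by_cases h : Nonempty co.carrier
  · left
    unfold pad
    rw [dif_pos h]
    exact Set.singleton_nonempty _
  · exact Or.inr (not_nonempty_iff.mp h)

/-- A lift of a closed subset of `T C` into a closed subcoalgebra of `C` is a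
coalgebra homomorphism. -/
lemma lift_hom (co : BCoalg B) {W : Set (TT Tc co.carrier)} {U : Set co.carrier}
    (hWc : W.Countable) (hW : Closed B hacc (TbObj Tc B hacc L co) W)
    (hUc : U.Countable) (hU : Closed B hacc co U)
    (hne : U.Nonempty ∨ IsEmpty co.carrier)
    (τ : ↥W → (Tc.obj (cs U hUc)).carrier)
    (hτ : ∀ w : ↥W, mk Tc U hUc (τ w) = w.1) :
    IsCoalgHom B (sg B hacc (TbObj Tc B hacc L co) W hW)
      (L.lift (dW B hacc co U hUc hU)) τ := by
  intro w
  haveI : Nonempty (Tc.obj (cs U hUc)).carrier := ⟨τ w⟩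
  obtain ⟨r, hr⟩ := (mk_inj Tc hUc hne).hasLeftInverse
  apply bmap_inj_of_retr B r hr
  erw [bmap_bmap]
  have lhs : B.map ((fun u => mk Tc U hUc u) ∘ τ)
      (sg B hacc (TbObj Tc B hacc L co) W hW w) = strT Tc B hacc L co w.1 := by
    refine Eq.trans (bmap_congr B (fun y => hτ y) _) ?_
    exact sg_spec B hacc (TbObj Tc B hacc L co) W hW w
  rw [lhs]
  have rhs : B.map (fun u => mk Tc U hUc u) (L.lift (dW B hacc co U hUc hU) (τ w))
      = strT Tc B hacc L co w.1 := by
    rw [← hτ w, strT_mk Tc B hacc L co hUc (τ w) hUc hU subset_rfl]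
    unfold strVal
    rw [tmap_incl_refl]
  rw [rhs]

lemma strT_map (co co' : BCoalg B) (h : co.carrier → co'.carrier)
    (hh : IsCoalgHom B co.str co'.str h) :
    IsCoalgHom B (strT Tc B hacc L co) (strT Tc B hacc L co') (tmapF Tc h) := by
  intro x
  induction x using Quotient.inductionOn with
  | h p =>
    have hWc := clo_cnt B hacc co p.S p.hS
    have hWcl := clo_closed B hacc co p.S
    have hSW := subset_clo B hacc co p.S
    set W := clo B hacc co p.S with hWdef
    have hW'c := clo_cnt B hacc co' (h '' W) (hWc.image h)
    have hW'cl := clo_closed B hacc co' (h '' W)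
    have hW'sub := subset_clo B hacc co' (h '' W)
    set W' := clo B hacc co' (h '' W) with hW'def
    have hSW' : h '' p.S ⊆ W' := (Set.image_mono (f := h) hSW).trans hW'sub
    -- the restricted map
    set hbar : ↥W → ↥W' := fun w => ⟨h w.1, hW'sub (Set.mem_image_of_mem h w.2)⟩
      with hbardef
    have hbarhom : IsCoalgHom B (sg B hacc co W hWcl) (sg B hacc co' W' hW'cl) hbar := by
      refine hom_into_sub B co' (sg_spec B hacc co' W' hW'cl) hbar (fun w => ?_)
      have e1 : B.map (fun y : ↥W => (hbar y).1) (sg B hacc co W hWcl w)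
          = B.map h (B.map Subtype.val (sg B hacc co W hWcl w)) := by
        rw [bmap_bmap]
        exact bmap_congr B (fun y => rfl) _
      rw [e1, sg_spec B hacc co W hWcl w]
      exact hh w.1
    have lhom := L.map_hom (dW B hacc co W hWc hWcl) (dW B hacc co' W' hW'c hW'cl)
      hbar hbarhom
    -- pointwise: tmapF h ∘ mk W = mk W' ∘ tmap hbar
    have ptw : ∀ u, tmapF Tc h (mk Tc W hWc u)
        = mk Tc W' hW'c (tmap Tc (cs W hWc) (cs W' hW'c) hbar u) := by
      intro u
      rw [tmapF_mk, ← mk_incl Tc (hWc.image h) hW'c hW'sub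
        (tmap Tc (cs W hWc) (cs (h '' W) (hWc.image h)) (rstr h W) u), tmap_tmap]
      exact congrArg (mk Tc W' hW'c) (tmap_congr Tc (fun a => rfl) u)
    show B.map (tmapF Tc h) (strT Tc B hacc L co (mk Tc p.S p.hS p.t)) = _
    rw [strT_mk Tc B hacc L co p.hS p.t hWc hWcl hSW]
    unfold strVal
    erw [bmap_bmap]
    refine Eq.trans (bmap_congr B (fun u => ptw u) _) ?_
    refine Eq.trans (bmap_bmap B (tmap Tc (cs W hWc) (cs W' hW'c) hbar)
      (fun u => mk Tc W' hW'c u)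
      (L.lift (dW B hacc co W hWc hWcl)
        (tmap Tc (cs p.S p.hS) (cs W hWc) (Set.inclusion hSW) p.t))).symm ?_
    refine Eq.trans (congrArg (B.map (fun u => mk Tc W' hW'c u)) (lhom _)) ?_
    show B.map (fun u => mk Tc W' hW'c u)
        (L.lift (dW B hacc co' W' hW'c hW'cl)
          (tmap Tc (cs W hWc) (cs W' hW'c) hbar
            (tmap Tc (cs p.S p.hS) (cs W hWc) (Set.inclusion hSW) p.t)))
      = strT Tc B hacc L co' (tmapF Tc h (mk Tc p.S p.hS p.t))
    rw [tmapF_mk, strT_mk Tc B hacc L co' (p.hS.image h) _ hW'c hW'cl hSW']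
    unfold strVal
    refine congrArg (B.map _) (congrArg (L.lift _) ?_)
    rw [tmap_tmap, tmap_tmap]
    exact tmap_congr Tc (fun a => rfl) p.t

lemma strT_eta (co : BCoalg B) :
    IsCoalgHom B co.str (strT Tc B hacc L co) (etaF Tc) := by
  intro x
  have hWc := clo_cnt B hacc co {x} (Set.countable_singleton x)
  have hWcl := clo_closed B hacc co {x}
  have hSW := subset_clo B hacc co {x}
  set W := clo B hacc co {x} with hWdef
  have hxW : x ∈ W := hSW rfl
  have lh := L.η_hom (dW B hacc co W hWc hWcl)
  show B.map (etaF Tc) (co.str x) = strT Tc B hacc L co (mk Tc {x} _ _)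
  rw [strT_mk Tc B hacc L co (Set.countable_singleton x) _ hWc hWcl hSW]
  unfold strVal
  rw [tmap_eta]
  have e1 : Tc.η (X := cs W hWc) (Set.inclusion hSW ⟨x, rfl⟩)
      = Tc.η (X := cs W hWc) ⟨x, hxW⟩ := rfl
  erw [e1, ← lh ⟨x, hxW⟩, bmap_bmap, ← sg_spec B hacc co W hWcl ⟨x, hxW⟩, bmap_bmap]
  exact bmap_congr B (fun w => (eta_mk Tc hWc w).symm) _

lemma strT_mu (co : BCoalg B) :
    IsCoalgHom B (strT Tc B hacc L (TbObj Tc B hacc L co)) (strT Tc B hacc L co)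
      (muF Tc) := by
  intro x
  induction x using Quotient.inductionOn with
  | h p =>
    show B.map (muF Tc)
        (strT Tc B hacc L (TbObj Tc B hacc L co) (mk Tc p.S p.hS p.t))
      = strT Tc B hacc L co (muF Tc (mk Tc p.S p.hS p.t))
    have hWc := clo_cnt B hacc (TbObj Tc B hacc L co) p.S p.hS
    have hWcl := clo_closed B hacc (TbObj Tc B hacc L co) p.S
    have hSW := subset_clo B hacc (TbObj Tc B hacc L co) p.S
    set W := clo B hacc (TbObj Tc B hacc L co) p.S with hWdef
    have l₀ := someLift Tc W hWc
    have hUc := clo_cnt B hacc co (l₀.U ∪ pad B co) (l₀.hU.union (pad_cnt B co))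
    have hUcl := clo_closed B hacc co (l₀.U ∪ pad B co)
    have hUsub := subset_clo B hacc co (l₀.U ∪ pad B co)
    set U := clo B hacc co (l₀.U ∪ pad B co) with hUdef
    have hne : U.Nonempty ∨ IsEmpty co.carrier :=
      (pad_ne B co).imp
        (fun hp => hp.mono (Set.subset_union_right.trans hUsub)) id
    set τ : ↥W → (Tc.obj (cs U hUc)).carrier := fun w =>
      tmap Tc (cs l₀.U l₀.hU) (cs U hUc)
        (Set.inclusion (Set.subset_union_left.trans hUsub)) (l₀.τ w) with hτdef
    have hτ : ∀ w : ↥W, mk Tc U hUc (τ w) = w.1 := fun w => by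
      rw [hτdef, mk_incl]
      exact l₀.isLift w
    have hthom : IsCoalgHom B (sg B hacc (TbObj Tc B hacc L co) W hWcl)
        (L.lift (dW B hacc co U hUc hUcl)) τ :=
      lift_hom Tc B hacc L co hWc hWcl hUc hUcl hne τ hτ
    have llift := L.map_hom (dW B hacc (TbObj Tc B hacc L co) W hWc hWcl)
      (L.apply (dW B hacc co U hUc hUcl)) τ hthom
    have lmu := L.μ_hom (dW B hacc co U hUc hUcl)
    rw [strT_mk Tc B hacc L (TbObj Tc B hacc L co) p.hS p.t hWc hWcl hSW]
    unfold strVal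
    erw [bmap_bmap]
    refine Eq.trans (bmap_congr B
      (fun z => muF_mk Tc W hWc z ⟨U, hUc, τ, hτ⟩) _) ?_
    refine Eq.trans (bmap_bmap B
      (fun z => Tc.μ (X := cs U hUc) (tmap Tc (cs W hWc) (Tc.obj (cs U hUc)) τ z))
      (fun u => mk Tc U hUc u)
      (L.lift (dW B hacc (TbObj Tc B hacc L co) W hWc hWcl)
        (tmap Tc (cs p.S p.hS) (cs W hWc) (Set.inclusion hSW) p.t))).symm ?_
    have inner : B.map (fun z => Tc.μ (X := cs U hUc)
          (tmap Tc (cs W hWc) (Tc.obj (cs U hUc)) τ z))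
        (L.lift (dW B hacc (TbObj Tc B hacc L co) W hWc hWcl)
          (tmap Tc (cs p.S p.hS) (cs W hWc) (Set.inclusion hSW) p.t))
        = L.lift (dW B hacc co U hUc hUcl)
            (Tc.μ (X := cs U hUc) (tmap Tc (cs W hWc) (Tc.obj (cs U hUc)) τ
              (tmap Tc (cs p.S p.hS) (cs W hWc) (Set.inclusion hSW) p.t))) := by
      refine Eq.trans (bmap_bmap B
        (tmap Tc (cs W hWc) (Tc.obj (cs U hUc)) τ) (Tc.μ (X := cs U hUc))
        (L.lift (dW B hacc (TbObj Tc B hacc L co) W hWc hWcl)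
          (tmap Tc (cs p.S p.hS) (cs W hWc) (Set.inclusion hSW) p.t))).symm ?_
      erw [llift _]
      exact lmu _
    rw [inner]
    rw [muF_mk Tc p.S p.hS p.t ⟨U, hUc, fun a => τ (Set.inclusion hSW a),
      fun a => hτ (Set.inclusion hSW a)⟩]
    rw [strT_mk Tc B hacc L co hUc _ hUc hUcl subset_rfl]
    unfold strVal
    rw [tmap_incl_refl]
    refine congrArg (B.map _) (congrArg (L.lift _) (congrArg (Tc.μ (X := cs U hUc)) ?_))
    rw [tmap_tmap]
    exact tmap_congr Tc (fun a => rfl) p.t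

/-- The extended monad on `Coalg(B)`. -/
noncomputable def bigTb : BCoalgMonad B where
  obj := fun c => TbObj Tc B hacc L c
  map := fun {c d} h _ => tmapF Tc h
  map_hom := fun {c d} h hh => strT_map Tc B hacc L c d h hh
  map_id := fun {c} => tmapF_id Tc
  map_comp := fun h₁ _ h₂ _ => tmapF_comp Tc h₁ h₂
  η := fun c => etaF Tc
  η_hom := fun c => strT_eta Tc B hacc L c
  μ := fun c => muF Tc
  μ_hom := fun c => strT_mu Tc B hacc L c
  η_nat := fun h _ x => eta_natF Tc h x
  μ_nat := fun h _ t => mu_natF Tc h t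
  left_unit := fun c t => left_unitF Tc t
  right_unit := fun c t => right_unitF Tc t
  assoc := fun c t => assocF Tc t

lemma alph_str (c : CBCoalg B) :
    IsCoalgHom B (L.lift c) (strT Tc B hacc L c.toBCoalg) (alph Tc c.toCSet) := by
  intro z
  have hWc : (Set.univ : Set c.toBCoalg.carrier).Countable := cnt_univ c.toCSet
  have hWcl : Closed B hacc c.toBCoalg Set.univ := fun x hx => Set.subset_univ _
  have huniv : IsCoalgHom B c.str (sg B hacc c.toBCoalg Set.univ hWcl)
      (fun x : c.carrier =>
        (⟨x, trivial⟩ : ↥(Set.univ : Set c.toBCoalg.carrier))) := by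
    refine hom_into_sub B c.toBCoalg (sg_spec B hacc c.toBCoalg Set.univ hWcl) _
      (fun x => ?_)
    exact congrFun B.map_id (c.str x)
  have lhm := L.map_hom c (dW B hacc c.toBCoalg Set.univ hWc hWcl) _ huniv
  show B.map (alph Tc c.toCSet) (L.lift c z)
    = strT Tc B hacc L c.toBCoalg (mk Tc Set.univ (cnt_univ c.toCSet) _)
  refine Eq.trans ?_ (strT_mk Tc B hacc L c.toBCoalg (cnt_univ c.toCSet) _ hWc hWcl subset_rfl).symm
  unfold strVal
  erw [tmap_incl_refl]
  refine Eq.trans ?_ (congrArg (B.map (fun u => mk Tc Set.univ hWc u)) (lhm z))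
  refine Eq.trans ?_ (bmap_bmap B
    (Tc.map (X := c.toCSet) (Y := (dW B hacc c.toBCoalg Set.univ hWc hWcl).toCSet)
      (fun x : c.carrier => (⟨x, trivial⟩ : ↥(Set.univ : Set c.toBCoalg.carrier))))
    (fun u => mk Tc Set.univ hWc u) (L.lift c z)).symm
  exact bmap_congr B (fun t => rfl) _

end St14

theorem statement14 (B : SetFunctor) (hacc : B.CountablyAccessible)
    (Tc : CntMonad) (L : CntMonadLifting B Tc) :
    ∃ T : SetMonad, SetMonadExtends Tc T ∧
      ∃ Tb : BCoalgMonad B, BCoalgMonadExtends B Tc L Tb ∧ IsLiftingUpToIso B T Tb := by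
  refine ⟨St14.bigT Tc, ?_, St14.bigTb Tc B hacc L, ?_, ?_⟩
  · refine ⟨fun X => St14.alph Tc X,
      fun X => ⟨St14.alph_inj Tc X, St14.alph_surj Tc X⟩,
      fun X Y f t => St14.alph_nat Tc X Y f t,
      fun X x => St14.alph_eta Tc X x,
      fun X t => St14.alph_mu Tc X t⟩
  · refine ⟨fun c => St14.alph Tc c.toCSet,
      fun c => St14.alph_str Tc B hacc L c,
      fun c => ⟨St14.alph_inj Tc c.toCSet, St14.alph_surj Tc c.toCSet⟩,
      fun c d h hh t => St14.alph_nat Tc c.toCSet d.toCSet h t,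
      fun c x => St14.alph_eta Tc c.toCSet x,
      fun c t => St14.alph_mu Tc c.toCSet t⟩
  · refine ⟨fun c => id, fun c => Function.bijective_id,
      fun c d h hh t => rfl, fun c x => rfl, fun c t => ?_⟩
    show St14.muF Tc t = St14.muF Tc (St14.tmapF Tc id t)
    rw [St14.tmapF_id]
    rfl
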